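/- Let G be a graph with threshold assignment τ and suppose τ(v)=0 for some node v. Define τ' on G∖v by τ'(u)=τ(u)−1 if u∈N(v) and τ(u)≥1, and τ'(u)=τ(u) otherwise. Then the minimum timed target set sizes satisfy MTT(G,τ)=MTT(G∖v,τ'). -/
import Mathlib


open Finset
open scoped Classical

variable {V : Type*}

noncomputable def Qseq (G : SimpleGraph V) [Fintype V] (τ : V → ℕ) (S : ℕ → Finset V) :
    ℕ → Finset V
  | 0 => ∅
  | i + 1 => Finset.univ.filter fun v =>
      τ v ≤ (G.neighborFinset v ∩ (S i ∪ Qseq G τ S i)).card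

def IsTTS (G : SimpleGraph V) [Fintype V] (τ : V → ℕ) (S : ℕ → Finset V) (k : ℕ) : Prop :=
  S k = ∅ ∧ Qseq G τ S k = Finset.univ

def ttsSize (S : ℕ → Finset V) (k : ℕ) : ℕ := ∑ i ∈ Finset.range (k + 1), (S i).card

noncomputable def strictMaj (G : SimpleGraph V) [Fintype V] (v : V) : ℕ := (G.degree v + 2) / 2

noncomputable def npStep (G : SimpleGraph V) [Fintype V] (τ : V → ℕ) (A : Finset V) : Finset V :=
  Finset.univ.filter fun v => τ v ≤ (G.neighborFinset v ∩ A).card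

def IsTS (G : SimpleGraph V) [Fintype V] (τ : V → ℕ) (S : Finset V) : Prop :=
  ∃ i : ℕ, (npStep G τ)^[i] S = Finset.univ

noncomputable def MTT (G : SimpleGraph V) [Fintype V] (τ : V → ℕ) : ℕ :=
  sInf {m | ∃ (S : ℕ → Finset V) (k : ℕ), IsTTS G τ S k ∧ ttsSize S k = m}

lemma mem_Qseq_succ {W : Type*} [Fintype W] (G : SimpleGraph W) (τ : W → ℕ)
    (S : ℕ → Finset W) (i : ℕ) (w : W) :
    w ∈ Qseq G τ S (i + 1) ↔ τ w ≤ (G.neighborFinset w ∩ (S i ∪ Qseq G τ S i)).card := by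
  simp [Qseq]

lemma tts_exists {W : Type*} [Fintype W] (G : SimpleGraph W) (τ : W → ℕ)
    (hτ : ∀ u, τ u ≤ G.degree u) :
    ∃ (S : ℕ → Finset W) (k : ℕ), IsTTS G τ S k := by
  refine ⟨fun i => if i = 0 then Finset.univ else ∅, 1, ?_, ?_⟩
  · simp
  · ext w
    rw [mem_Qseq_succ]
    simp only [Qseq, if_pos rfl, if_true, Finset.union_empty, Finset.inter_univ, Finset.mem_univ,
      iff_true, SimpleGraph.card_neighborFinset_eq_degree]
    exact hτ w

theorem stmt11 [Fintype V] (G : SimpleGraph V) (τ : V → ℕ)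
    (hτ : ∀ u, τ u ≤ G.degree u) (v : V) (hv : τ v = 0) :
    MTT G τ =
      MTT (G.induce {u | u ≠ v})
        (fun u => if G.Adj v ↑u ∧ 1 ≤ τ ↑u then τ ↑u - 1 else τ ↑u) := by
  set G' := G.induce {u | u ≠ v} with hG'
  set τ' : ↥{u : V | u ≠ v} → ℕ := fun u => if G.Adj v ↑u ∧ 1 ≤ τ ↑u then τ ↑u - 1 else τ ↑u
    with hτ'
  set P : Set ℕ := {m | ∃ (S : ℕ → Finset V) (k : ℕ), IsTTS G τ S k ∧ ttsSize S k = m} with hP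
  set P' : Set ℕ := {m | ∃ (S : ℕ → Finset ↥{u : V | u ≠ v}) (k : ℕ),
      IsTTS G' τ' S k ∧ ttsSize S k = m} with hP'
  -- direction C: from a TTS for G, build one for G' of no larger size
  have dirC : ∀ m ∈ P, ∃ m' ∈ P', m' ≤ m := by
    rintro m ⟨S, k, ⟨hSk, hQk⟩, rfl⟩
    set S' : ℕ → Finset ↥{u : V | u ≠ v} :=
      fun i => Finset.univ.filter (fun a => (a : V) ∈ S i) with hS'
    have hC : ∀ i (u : ↥{u : V | u ≠ v}), (u : V) ∈ Qseq G τ S i → u ∈ Qseq G' τ' S' i := by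
      intro i
      induction i with
      | zero => intro u hu; simp [Qseq] at hu
      | succ i ih =>
        intro u hu
        rw [mem_Qseq_succ] at hu ⊢
        set Bg := G.neighborFinset (u : V) ∩ (S i ∪ Qseq G τ S i) with hBg
        set Bt := G'.neighborFinset u ∩ (S' i ∪ Qseq G' τ' S' i) with hBt
        suffices hgoal : τ' u ≤ Bt.card by
          convert hgoal using 2
          rw [hBt]
          congr!
        have hsub : Bg.erase v ⊆ Bt.image Subtype.val := by
          intro a ha
          rw [Finset.mem_erase] at ha
          obtain ⟨hav, ha⟩ := ha
          rw [Finset.mem_inter, Finset.mem_union] at ha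
          refine Finset.mem_image.2 ⟨⟨a, hav⟩, ?_, rfl⟩
          rw [Finset.mem_inter, Finset.mem_union]
          constructor
          · rw [SimpleGraph.mem_neighborFinset] at ha ⊢
            exact ha.1
          · rcases ha.2 with h | h
            · exact Or.inl (by simp [hS', h])
            · exact Or.inr (ih _ h)
        have hcard : Bg.erase v ⊆ Bt.image Subtype.val → (Bg.erase v).card ≤ Bt.card := by
          intro h
          calc (Bg.erase v).card ≤ (Bt.image Subtype.val).card := Finset.card_le_card h
            _ = Bt.card := Finset.card_image_of_injective _ Subtype.val_injective
        have hle := hcard hsub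
        by_cases hadj : G.Adj v (u : V)
        · have h1 : Bg.card - 1 ≤ (Bg.erase v).card := Finset.pred_card_le_card_erase
          have hτle : τ' u ≤ τ (u : V) - 1 := by
            simp only [hτ', hadj, true_and]
            split <;> omega
          omega
        · have hveq : Bg.erase v = Bg := by
            apply Finset.erase_eq_of_notMem
            intro hmem
            rw [hBg, Finset.mem_inter, SimpleGraph.mem_neighborFinset] at hmem
            exact hadj hmem.1.symm
          have hτeq : τ' u = τ (u : V) := by simp [hτ', hadj]
          rw [hveq] at hle
          omega
    refine ⟨ttsSize S' k, ⟨S', k, ⟨?_, ?_⟩, rfl⟩, ?_⟩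
    · simp [hS', hSk]
    · ext u
      simp only [Finset.mem_univ, iff_true]
      exact hC k u (by rw [hQk]; exact Finset.mem_univ _)
    · apply Finset.sum_le_sum
      intro i _
      calc (S' i).card = ((S' i).image Subtype.val).card :=
            (Finset.card_image_of_injective _ Subtype.val_injective).symm
        _ ≤ (S i).card := by
            apply Finset.card_le_card
            intro a ha
            rw [Finset.mem_image] at ha
            obtain ⟨b, hb, rfl⟩ := ha
            simpa [hS'] using hb
  -- direction B: from a TTS for G', build one for G of equal size
  have dirB : ∀ m ∈ P', m ∈ P := by
    rintro m ⟨S', k, ⟨hSk, hQk⟩, rfl⟩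
    set T : ℕ → Finset V := fun i => match i with
      | 0 => ∅
      | j + 1 => (S' j).image Subtype.val with hT
    have hAv : ∀ i, v ∈ Qseq G τ T (i + 1) := by
      intro i
      rw [mem_Qseq_succ]
      simp [hv]
    have hB : ∀ i (u : ↥{u : V | u ≠ v}), u ∈ Qseq G' τ' S' i →
        (u : V) ∈ Qseq G τ T (i + 1) := by
      intro i
      induction i with
      | zero => intro u hu; simp [Qseq] at hu
      | succ i ih =>
        intro u hu
        rw [mem_Qseq_succ] at hu ⊢
        set Bt := G'.neighborFinset u ∩ (S' i ∪ Qseq G' τ' S' i) with hBt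
        set Bg := G.neighborFinset (u : V) ∩ (T (i + 1) ∪ Qseq G τ T (i + 1)) with hBg
        have hu' : τ' u ≤ Bt.card := by
          convert hu using 2
          rw [hBt]
          congr!
        clear hu
        have hsub : Bt.image Subtype.val ⊆ Bg := by
          intro a ha
          rw [Finset.mem_image] at ha
          obtain ⟨b, hb, rfl⟩ := ha
          rw [Finset.mem_inter, Finset.mem_union] at hb ⊢
          constructor
          · rw [SimpleGraph.mem_neighborFinset] at hb ⊢
            exact hb.1
          · rcases hb.2 with h | h
            · exact Or.inl (Finset.mem_image_of_mem _ h)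
            · exact Or.inr (ih _ h)
        have hcard1 : Bt.card = (Bt.image Subtype.val).card :=
          (Finset.card_image_of_injective _ Subtype.val_injective).symm
        by_cases hadj : G.Adj v (u : V)
        · have hvBg : v ∈ Bg := by
            rw [hBg, Finset.mem_inter, SimpleGraph.mem_neighborFinset, Finset.mem_union]
            exact ⟨hadj.symm, Or.inr (hAv i)⟩
          have hvim : v ∉ Bt.image Subtype.val := by
            intro h
            rw [Finset.mem_image] at h
            obtain ⟨b, _, hbv⟩ := h
            exact b.2 hbv
          have hins : insert v (Bt.image Subtype.val) ⊆ Bg :=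
            Finset.insert_subset hvBg hsub
          have hle := Finset.card_le_card hins
          rw [Finset.card_insert_of_notMem hvim] at hle
          have hτle : τ (u : V) ≤ τ' u + 1 := by
            simp only [hτ', hadj, true_and]
            split <;> omega
          omega
        · have hτeq : τ' u = τ (u : V) := by simp [hτ', hadj]
          have hle := Finset.card_le_card hsub
          omega
    refine ⟨T, k + 1, ⟨?_, ?_⟩, ?_⟩
    · simp [hT, hSk]
    · ext w
      simp only [Finset.mem_univ, iff_true]
      by_cases hw : w = v
      · subst hw; exact hAv k
      · exact hB k ⟨w, hw⟩ (by rw [hQk]; exact Finset.mem_univ _)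
    · show ∑ i ∈ Finset.range (k + 2), (T i).card = ttsSize S' k
      rw [Finset.sum_range_succ']
      simp only [hT]
      rw [ttsSize]
      simp [Finset.card_image_of_injective _ Subtype.val_injective]
  -- assemble
  have hPne : P.Nonempty := by
    obtain ⟨S, k, h⟩ := tts_exists G τ hτ
    exact ⟨ttsSize S k, S, k, h, rfl⟩
  obtain ⟨m', hm'P', hm'le⟩ := dirC _ (Nat.sInf_mem hPne)
  have hP'ne : P'.Nonempty := ⟨m', hm'P'⟩
  apply le_antisymm
  · exact le_trans (Nat.sInf_le (dirB _ (Nat.sInf_mem hP'ne))) (le_refl _)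
  · exact le_trans (Nat.sInf_le hm'P') hm'le
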